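/- For non-negative integers g, d, r with r ≥ 1, d ≥ r, and ρ = (r+1)(d-r) - g·r ≥ 0 (so that g - d + r ≥ 0 may fail; assume d ≤ g + r so all factorials below make sense), the Castelnuovo number g!·∏_{i=0}^{r} i!/(g-d+r+i)! is a positive integer. -/

import Mathlib

open Finset

open Nat

lemma sum_bmod (q b : ℕ) (hq : 0 < q) (hb : b < q) (n : ℕ) :
    ∑ i ∈ range n, (b + i % q) / q = b * (n / q) + (n % q + b - q) := by
  induction n with
  | zero => simp; omega
  | succ n ih =>
    rw [Finset.sum_range_succ, ih]
    have h1 : n % q < q := Nat.mod_lt _ hq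
    have hdm : q * (n / q) + n % q = n := Nat.div_add_mod n q
    have h2 : (b + n % q) / q = if q ≤ b + n % q then 1 else 0 := by
      split_ifs with h
      · exact Nat.div_eq_of_lt_le (by omega) (by omega)
      · exact Nat.div_eq_of_lt (by omega)
    by_cases hc : n % q = q - 1
    · have hn1 : n + 1 = q * (n / q + 1) := by rw [Nat.mul_succ]; omega
      have e1 : (n + 1) / q = n / q + 1 := by rw [hn1, Nat.mul_div_cancel_left _ hq]
      have e2 : (n + 1) % q = 0 := by rw [hn1, Nat.mul_mod_right]
      rw [e1, e2, h2]
      rw [Nat.mul_succ]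
      split_ifs with h <;> omega
    · have hn1 : n + 1 = (n % q + 1) + (n / q) * q := by
        rw [Nat.mul_comm]; omega
      have e1 : (n + 1) / q = n / q := by
        rw [hn1, Nat.add_mul_div_right _ _ hq, Nat.div_eq_of_lt (by omega), Nat.zero_add]
      have e2 : (n + 1) % q = n % q + 1 := by
        rw [hn1, Nat.add_mul_mod_self_right, Nat.mod_eq_of_lt (by omega)]
      rw [e1, e2, h2]
      split_ifs with h <;> omega

lemma aux_le (q b e : ℕ) (hb : b < q) (he : e < q) : e + b - q ≤ b * e / q := by
  rcases le_or_gt (e + b) q with h | h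
  · simp [Nat.sub_eq_zero_of_le h]
  · rw [Nat.le_div_iff_mul_le (by omega)]
    zify [Nat.le_of_lt h]
    nlinarith [Int.ofNat_le.2 hb.le, Int.ofNat_le.2 he.le]

lemma floor_sum_le (q s n : ℕ) (hq : 0 < q) :
    ∑ i ∈ range n, (s + i) / q ≤ s * n / q + ∑ i ∈ range n, i / q := by
  obtain ⟨a, b, hbq, rfl⟩ : ∃ a b, b < q ∧ s = q * a + b :=
    ⟨s / q, s % q, Nat.mod_lt _ hq, by have := Nat.div_add_mod s q; omega⟩
  have key : ∀ i : ℕ, (q * a + b + i) / q = a + (i / q + (b + i % q) / q) := by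
    intro i
    have hdmi : q * (i / q) + i % q = i := Nat.div_add_mod i q
    have hi : q * a + b + i = (b + i % q) + q * (a + i / q) := by
      rw [Nat.mul_add]; omega
    rw [hi, Nat.add_mul_div_left _ _ hq]
    ring
  simp only [key]
  rw [Finset.sum_add_distrib, Finset.sum_add_distrib, Finset.sum_const, card_range, smul_eq_mul]
  have hdm : q * (n / q) + n % q = n := Nat.div_add_mod n q
  have hrhs : (q * a + b) * n / q = a * n + b * n / q := by
    have h : (q * a + b) * n = b * n + q * (a * n) := by ring
    rw [h, Nat.add_mul_div_left _ _ hq]; omega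
  have hbn : b * n / q = b * (n / q) + b * (n % q) / q := by
    have h : b * n = b * (n % q) + q * (b * (n / q)) := by
      calc b * n = b * (q * (n / q) + n % q) := by rw [hdm]
        _ = b * (n % q) + q * (b * (n / q)) := by ring
    rw [h, Nat.add_mul_div_left _ _ hq]; omega
  rw [hrhs, hbn, sum_bmod q b hq hbq]
  have haux := aux_le q b (n % q) hbq (Nat.mod_lt _ hq)
  have hcomm : n * a = a * n := Nat.mul_comm n a
  omega

lemma prod_fact_dvd (s n g : ℕ) (h : s * n ≤ g) :
    (∏ i ∈ range n, (s + i)!) ∣ g ! * ∏ i ∈ range n, i ! := by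
  have hL : (∏ i ∈ range n, (s + i)!) ≠ 0 :=
    Finset.prod_ne_zero_iff.2 fun i _ => (Nat.factorial_pos _).ne'
  have hR : g ! * ∏ i ∈ range n, i ! ≠ 0 :=
    Nat.mul_ne_zero (Nat.factorial_pos _).ne'
      (Finset.prod_ne_zero_iff.2 fun i _ => (Nat.factorial_pos _).ne')
  rw [← Nat.factorization_le_iff_dvd hL hR]
  rw [Nat.factorization_prod (fun x _ => (Nat.factorial_pos _).ne'),
    Nat.factorization_mul (Nat.factorial_pos _).ne'
      (Finset.prod_ne_zero_iff.2 fun i _ => (Nat.factorial_pos _).ne'),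
    Nat.factorization_prod (fun x _ => (Nat.factorial_pos _).ne')]
  intro p
  simp only [Finsupp.coe_add, Pi.add_apply, Finset.sum_apply']
  by_cases hp : p.Prime
  · haveI : Fact p.Prime := ⟨hp⟩
    set b := Nat.log p (g + s + n) + 1 with hb
    have hfac : ∀ m : ℕ, m ≤ g + s + n →
        (m !).factorization p = ∑ k ∈ Finset.Ico 1 b, m / p ^ k := by
      intro m hm
      rw [Nat.factorization_def _ hp]
      exact padicValNat_factorial (Nat.lt_succ_of_le (Nat.log_mono_right hm))
    have e1 : ∀ i ∈ range n, ((s + i)!).factorization p = ∑ k ∈ Finset.Ico 1 b, (s + i) / p ^ k :=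
      fun i hi => hfac _ (by have := Finset.mem_range.1 hi; omega)
    have e2 : ∀ i ∈ range n, (i !).factorization p = ∑ k ∈ Finset.Ico 1 b, i / p ^ k :=
      fun i hi => hfac _ (by have := Finset.mem_range.1 hi; omega)
    rw [Finset.sum_congr rfl e1, Finset.sum_congr rfl e2, hfac g (by omega)]
    rw [Finset.sum_comm, Finset.sum_comm (s := range n)]
    rw [← Finset.sum_add_distrib]
    apply Finset.sum_le_sum
    intro k _
    have hq : 0 < p ^ k := Nat.pow_pos hp.pos
    calc ∑ i ∈ range n, (s + i) / p ^ k
        ≤ s * n / p ^ k + ∑ i ∈ range n, i / p ^ k := floor_sum_le _ _ _ hq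
      _ ≤ g / p ^ k + ∑ i ∈ range n, i / p ^ k := by
          gcongr
  · simp [Nat.factorization_eq_zero_of_not_prime _ hp]

/-- For non-negative integers `g, d, r` with `r ≥ 1`, `d ≥ r`,
`d ≤ g + r` (so `g - d + r ≥ 0`), and Brill–Noether number
`ρ = (r+1)(d-r) - g·r ≥ 0`, the Castelnuovo number
`g!·∏_{i=0}^{r} i!/(g-d+r+i)!` is a positive integer. -/
theorem castelnuovo_number_pos_int
    (g d r : ℕ) (hr : 1 ≤ r) (hdr : r ≤ d) (hdg : d ≤ g + r)
    (hρ : 0 ≤ ((r : ℤ) + 1) * ((d : ℤ) - r) - (g : ℤ) * r) :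
    ∃ N : ℕ, 0 < N ∧ (N : ℚ) =
      (Nat.factorial g : ℚ) * ∏ i ∈ Finset.range (r + 1),
        (Nat.factorial i : ℚ) / (Nat.factorial (g + r - d + i) : ℚ) := by
  have hs : (g + r - d) * (r + 1) ≤ g := by
    zify [hdg]
    nlinarith [hρ]
  have hdvd := prod_fact_dvd (g + r - d) (r + 1) g hs
  have hDpos : 0 < ∏ i ∈ range (r + 1), (g + r - d + i)! :=
    Finset.prod_pos fun i _ => Nat.factorial_pos _
  have hMpos : 0 < g ! * ∏ i ∈ range (r + 1), i ! :=
    Nat.mul_pos (Nat.factorial_pos _) (Finset.prod_pos fun i _ => Nat.factorial_pos _)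
  refine ⟨(g ! * ∏ i ∈ range (r + 1), i !) / ∏ i ∈ range (r + 1), (g + r - d + i)!,
    Nat.div_pos (Nat.le_of_dvd hMpos hdvd) hDpos, ?_⟩
  rw [Nat.cast_div hdvd (by exact_mod_cast hDpos.ne')]
  push_cast
  rw [Finset.prod_div_distrib, mul_div_assoc]
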